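/- arXiv:2601.21118 — 4 statements merged into one kernel-verified Lean document; each statement's English description precedes it below -/
import Mathlib

section
/- For a linear order L, the ordered group V_L := ⊕_{l∈L} ℚ (with the ordering determined by the sign of the coordinate at the maximum of the support) has Archimedean rank order-isomorphic to L; that is, the map sending l to the Archimedean class of the basis vector e_l is an order isomorphism from L onto the linearly ordered set of Archimedean equivalence classes of nonzero elements of V_L. -/
/-- `f > 0` in `V_L = ⊕_{l∈L} ℚ` iff the value of `f` at the maximum of its
support is positive. -/
def VLPos {L : Type*} [LinearOrder L] (f : L →₀ ℚ) : Prop :=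
  ∃ l : L, 0 < f l ∧ ∀ m : L, l < m → f m = 0

/-- `f < g` in `V_L`. -/
def VLLt {L : Type*} [LinearOrder L] (f g : L →₀ ℚ) : Prop :=
  VLPos (g - f)

open Classical in
/-- The absolute value in `V_L`. -/
noncomputable def VLAbs {L : Type*} [LinearOrder L] (f : L →₀ ℚ) : L →₀ ℚ :=
  if VLPos f then f else -f

/-- Archimedean equivalence in `V_L`. -/
def VLSim {L : Type*} [LinearOrder L] (f g : L →₀ ℚ) : Prop :=
  ∃ N : ℕ, 0 < N ∧ VLLt (VLAbs g) (N • VLAbs f) ∧ VLLt (VLAbs f) (N • VLAbs g)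

/-- The class of `f` is strictly below the class of `g`. -/
def VLLL {L : Type*} [LinearOrder L] (f g : L →₀ ℚ) : Prop :=
  ∀ N : ℕ, 0 < N → VLLt (N • VLAbs f) (VLAbs g)

section Aux
variable {L : Type*} [LinearOrder L]

lemma VL_exists_max (f : L →₀ ℚ) (hf : f ≠ 0) :
    ∃ l, f l ≠ 0 ∧ ∀ m, l < m → f m = 0 := by
  have hs : f.support.Nonempty := Finsupp.support_nonempty_iff.mpr hf
  refine ⟨f.support.max' hs, Finsupp.mem_support_iff.mp (f.support.max'_mem hs), fun m hm => ?_⟩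
  by_contra h
  exact absurd (f.support.le_max' m (Finsupp.mem_support_iff.mpr h)) (not_le.mpr hm)

lemma VLPos_single (l : L) : VLPos (Finsupp.single l (1 : ℚ)) :=
  ⟨l, by simp, fun m hm => Finsupp.single_eq_of_ne' hm.ne⟩

lemma VLAbs_single (l : L) : VLAbs (Finsupp.single l (1 : ℚ)) = Finsupp.single l 1 :=
  if_pos (VLPos_single l)

lemma VLAbs_spec (f : L →₀ ℚ) (hf : f ≠ 0) :
    ∃ l, 0 < VLAbs f l ∧ ∀ m, l < m → VLAbs f m = 0 := by
  obtain ⟨l, hl, hab⟩ := VL_exists_max f hf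
  rcases hl.lt_or_gt with h | h
  · have hnp : ¬ VLPos f := by
      rintro ⟨k, hk, hk2⟩
      rcases lt_trichotomy k l with h' | h' | h'
      · exact absurd (hk2 l h') h.ne
      · subst h'; exact absurd hk (not_lt.mpr h.le)
      · exact absurd (hab k h') (ne_of_gt hk)
    rw [VLAbs, if_neg hnp]
    exact ⟨l, by simpa using h, fun m hm => by simp [hab m hm]⟩
  · have hp : VLPos f := ⟨l, h, hab⟩
    rw [VLAbs, if_pos hp]
    exact ⟨l, h, hab⟩

end Aux

/-- For a linear order `L`, the ordered group `V_L := ⊕_{l∈L} ℚ` has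
Archimedean rank order-isomorphic to `L`: the map sending `l` to the
Archimedean class of the basis vector `e_l = single l 1` is injective,
order-preserving, and every nonzero element of `V_L` is Archimedean
equivalent to some `e_l`. -/
theorem VL_archimedean_rank_orderIso {L : Type*} [LinearOrder L] :
    (∀ l : L, (Finsupp.single l (1 : ℚ)) ≠ 0) ∧
    (∀ l m : L, l < m ↔ VLLL (Finsupp.single l (1 : ℚ)) (Finsupp.single m (1 : ℚ))) ∧
    (∀ l m : L, VLSim (Finsupp.single l (1 : ℚ)) (Finsupp.single m (1 : ℚ)) → l = m) ∧
    (∀ f : L →₀ ℚ, f ≠ 0 → ∃ l : L, VLSim f (Finsupp.single l (1 : ℚ))) := by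
  refine ⟨fun l => by simp, ?_, ?_, ?_⟩
  · intro l m
    constructor
    · intro hlm N hN
      rw [VLLt, VLAbs_single, VLAbs_single]
      refine ⟨m, ?_, fun k hk => ?_⟩
      · simp [Finsupp.single_eq_of_ne' hlm.ne]
      · simp [Finsupp.single_eq_of_ne' hk.ne, Finsupp.single_eq_of_ne' (hlm.trans hk).ne]
    · intro h
      have h1 := h 1 one_pos
      rw [VLLt, VLAbs_single, VLAbs_single, one_smul] at h1
      obtain ⟨k, hk, hk2⟩ := h1
      rcases lt_trichotomy l m with h' | h' | h'
      · exact h'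
      · subst h'; simp at hk
      · exfalso
        rcases eq_or_ne k m with rfl | hkm
        · have := hk2 l h'
          simp [Finsupp.single_eq_of_ne' h'.ne] at this
        · simp [Finsupp.single_eq_of_ne' (Ne.symm hkm)] at hk
          rcases eq_or_ne l k with rfl | hlk
          · simp at hk; linarith
          · simp [Finsupp.single_eq_of_ne' hlk] at hk
  · intro l m ⟨N, hN, h1, h2⟩
    rw [VLLt, VLAbs_single, VLAbs_single] at h1 h2
    have key : ∀ a b : L, VLPos (N • Finsupp.single a (1:ℚ) - Finsupp.single b 1) → ¬ a < b := by
      intro a b ⟨k, hk, hk2⟩ hab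
      rcases eq_or_ne k a with rfl | hka
      · have := hk2 b hab
        simp [Finsupp.single_eq_of_ne' hab.ne, Finsupp.single_eq_of_ne' hab.ne'] at this
      · simp [Finsupp.single_eq_of_ne' (Ne.symm hka)] at hk
        rcases eq_or_ne b k with rfl | hbk
        · simp at hk; linarith
        · simp [Finsupp.single_eq_of_ne' hbk] at hk
    have hml := key l m h1
    have hlm := key m l h2
    exact le_antisymm (not_lt.mp hlm) (not_lt.mp hml)
  · intro f hf
    obtain ⟨l, hl, hab⟩ := VLAbs_spec f hf
    obtain ⟨N, hN⟩ := exists_nat_gt (max (VLAbs f l) (1 / VLAbs f l))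
    have hgl : (0:ℚ) < VLAbs f l := hl
    have hN1 : (VLAbs f l) < N := lt_of_le_of_lt (le_max_left _ _) hN
    have hN2 : 1 / VLAbs f l < N := lt_of_le_of_lt (le_max_right _ _) hN
    have hNpos : 0 < N := by
      by_contra h
      simp [Nat.le_zero.mp (not_lt.mp h)] at hN1
      linarith
    refine ⟨l, N, hNpos, ?_, ?_⟩
    · rw [VLLt, VLAbs_single]
      refine ⟨l, ?_, fun k hk => ?_⟩
      · simp [nsmul_eq_mul]
        rw [div_lt_iff₀ hgl] at hN2
        linarith [hN2]
      · simp [hab k hk, Finsupp.single_eq_of_ne' hk.ne]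
    · rw [VLLt, VLAbs_single]
      refine ⟨l, ?_, fun k hk => ?_⟩
      · simp [nsmul_eq_mul]
        linarith
      · simp [hab k hk, Finsupp.single_eq_of_ne' hk.ne]
end

section
/- If V is a divisible linearly ordered abelian group and P is a model of Presburger arithmetic, then V × P with coordinatewise addition, lexicographic order, 0 = (0,0) and 1 = (0,1), is again a model of Presburger arithmetic. In particular, it is a discretely ordered abelian group satisfying, for each n ≥ 2, that every element is within distance n-1 above a multiple of n. -/
/-- The lexicographic strict order on a product. -/
def LexLt {V P : Type*} [LT V] [LT P] (a b : V × P) : Prop :=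
  a.1 < b.1 ∨ (a.1 = b.1 ∧ a.2 < b.2)

/-- If `V` is a divisible linearly ordered abelian group and `P` is a model of
Presburger arithmetic (a discretely ordered abelian group with `one` the
successor of `0`, satisfying the division-with-remainder axioms), then `V × P`
with coordinatewise addition, lexicographic order, `0 = (0,0)`, `1 = (0, one)`
is again a model of Presburger arithmetic: the lexicographic order is a
translation-invariant strict linear order, it is discrete (nothing strictly
between `0` and `1`), `1 > 0`, and the division axioms hold. -/
theorem prod_divisible_presburger_is_presburger
    {V P : Type*} [AddCommGroup V] [LinearOrder V] [IsOrderedAddMonoid V]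
    [AddCommGroup P] [LinearOrder P] [IsOrderedAddMonoid P]
    (one : P) (hpos : 0 < one)
    (hdisc : ∀ x : P, ¬ (0 < x ∧ x < one))
    (hdivrem : ∀ n : ℕ, 2 ≤ n → ∀ x : P, ∃ y : P, ∃ r : ℕ, r < n ∧ x = n • y + r • one)
    (hVdiv : ∀ (v : V) (n : ℕ), 0 < n → ∃ w : V, n • w = v) :
    (∀ a : V × P, ¬ LexLt a a) ∧
    (∀ a b c : V × P, LexLt a b → LexLt b c → LexLt a c) ∧
    (∀ a b : V × P, LexLt a b ∨ a = b ∨ LexLt b a) ∧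
    (∀ a b c : V × P, LexLt a b → LexLt (c + a) (c + b)) ∧
    LexLt (0 : V × P) ((0 : V), one) ∧
    (∀ x : V × P, ¬ (LexLt 0 x ∧ LexLt x ((0 : V), one))) ∧
    (∀ n : ℕ, 2 ≤ n → ∀ x : V × P, ∃ y : V × P, ∃ r : ℕ,
      r < n ∧ x = n • y + r • (((0 : V), one) : V × P)) := by
  refine ⟨?_, ?_, ?_, ?_, ?_, ?_, ?_⟩
  · rintro a (h | ⟨-, h⟩) <;> exact lt_irrefl _ h
  · rintro a b c (h1 | ⟨e1, h1⟩) (h2 | ⟨e2, h2⟩)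
    · exact Or.inl (h1.trans h2)
    · exact Or.inl (e2 ▸ h1)
    · exact Or.inl (e1 ▸ h2)
    · exact Or.inr ⟨e1.trans e2, h1.trans h2⟩
  · intro a b
    rcases lt_trichotomy a.1 b.1 with h | h | h
    · exact Or.inl (Or.inl h)
    · rcases lt_trichotomy a.2 b.2 with h2 | h2 | h2
      · exact Or.inl (Or.inr ⟨h, h2⟩)
      · exact Or.inr (Or.inl (Prod.ext h h2))
      · exact Or.inr (Or.inr (Or.inr ⟨h.symm, h2⟩))
    · exact Or.inr (Or.inr (Or.inl h))
  · rintro a b c (h | ⟨e, h⟩)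
    · exact Or.inl (by simpa using add_lt_add_left h c.1)
    · exact Or.inr ⟨by simp [e], by simpa using add_lt_add_left h c.2⟩
  · exact Or.inr ⟨rfl, hpos⟩
  · rintro ⟨v, p⟩ ⟨(h1 | ⟨e1, h1⟩), (h2 | ⟨e2, h2⟩)⟩
    · exact absurd (h1.trans h2) (lt_irrefl _)
    · exact absurd (e2 ▸ h1) (lt_irrefl _)
    · exact absurd (e1 ▸ h2) (lt_irrefl _)
    · exact hdisc p ⟨h1, h2⟩
  · intro n hn ⟨v, p⟩
    obtain ⟨w, hw⟩ := hVdiv v n (by omega)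
    obtain ⟨y, r, hr, hy⟩ := hdivrem n hn p
    exact ⟨(w, y), r, hr, Prod.ext (by simp [hw]) (by simpa using hy)⟩
end

section
/- Let P and Q be torsion-free abelian groups, let b₁,...,b_n ∈ P be a basis (maximal ℤ-linearly independent set) together with further data, and let a₁,...,a_n ∈ Q be such that: (i) {a₁,...,a_n} is linearly independent, and (ii) for each i and each positive integer m and integers k's, divisibility facts transfer (a_i has the same residue data as b_i). Then the map sending each b_i to a_i extends uniquely to a group embedding f : P → Q determined by: if m·p = k₁b₁+...+k_nb_n then f(p) is the unique q ∈ Q with m·q = k₁a₁+...+k_na_n. Uniqueness of q follows from torsion-freeness. -/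
/-- Let `P` and `Q` be torsion-free abelian groups, `b₁, …, b_n ∈ P` a basis
(a maximal ℤ-linearly independent set, so every element satisfies a dependence
equation over it) and `a₁, …, a_n ∈ Q` a linearly independent family such that
all divisibility facts transfer from the `b`'s to the `a`'s.  Then `b_i ↦ a_i`
extends to a group embedding `f : P → Q`, uniquely determined by
`m • p = ∑ k_i • b_i → m • f p = ∑ k_i • a_i`, and such an extension is the
unique homomorphism sending each `b_i` to `a_i`. -/
theorem basis_to_independent_extends_to_embedding
    {P Q : Type*} [AddCommGroup P] [AddCommGroup Q]
    (htfP : ∀ (m : ℕ) (x : P), 0 < m → m • x = 0 → x = 0)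
    (htfQ : ∀ (m : ℕ) (x : Q), 0 < m → m • x = 0 → x = 0)
    {n : ℕ} (b : Fin n → P) (a : Fin n → Q)
    (hbindep : ∀ k : Fin n → ℤ, ∑ i, k i • b i = 0 → ∀ i, k i = 0)
    (hbbasis : ∀ p : P, ∃ (m : ℕ) (k : Fin n → ℤ), 0 < m ∧ m • p = ∑ i, k i • b i)
    (haindep : ∀ k : Fin n → ℤ, ∑ i, k i • a i = 0 → ∀ i, k i = 0)
    (htransfer : ∀ (m : ℕ) (k : Fin n → ℤ), 0 < m →
      (∃ p : P, m • p = ∑ i, k i • b i) → ∃ q : Q, m • q = ∑ i, k i • a i) :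
    (∃ f : P →+ Q, Function.Injective f ∧ (∀ i, f (b i) = a i) ∧
      ∀ (p : P) (m : ℕ) (k : Fin n → ℤ), 0 < m → m • p = ∑ i, k i • b i →
        m • f p = ∑ i, k i • a i) ∧
    (∀ f g : P →+ Q, (∀ i, f (b i) = a i) → (∀ i, g (b i) = a i) → f = g) := by
  have uniqQ : ∀ (m : ℕ) (q₁ q₂ : Q), 0 < m → m • q₁ = m • q₂ → q₁ = q₂ := by
    intro m q₁ q₂ hm h
    have := htfQ m (q₁ - q₂) hm (by rw [smul_sub, h, sub_self])
    exact sub_eq_zero.mp this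
  -- cross relation between two representations of the same p
  have hcross : ∀ (m₁ m₂ : ℕ) (k₁ k₂ : Fin n → ℤ) (p : P), 0 < m₁ → 0 < m₂ →
      m₁ • p = ∑ i, k₁ i • b i → m₂ • p = ∑ i, k₂ i • b i →
      ∀ i, (m₂ : ℤ) * k₁ i = (m₁ : ℤ) * k₂ i := by
    intro m₁ m₂ k₁ k₂ p hm₁ hm₂ h₁ h₂ i
    have h3 : ∑ i, ((m₂ : ℤ) * k₁ i - (m₁ : ℤ) * k₂ i) • b i = 0 := by
      have hc : (m₂ : ℤ) • (m₁ • p) - (m₁ : ℤ) • (m₂ • p) = 0 := by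
        simp [natCast_zsmul, smul_smul, Nat.mul_comm]
      rw [h₁, h₂] at hc
      rw [← hc, Finset.smul_sum, Finset.smul_sum, ← Finset.sum_sub_distrib]
      refine Finset.sum_congr rfl fun j _ => ?_
      rw [sub_smul, mul_smul, mul_smul]
    have := hbindep _ h3 i
    linarith
  have hF : ∀ p : P, ∃ q : Q, ∀ (m : ℕ) (k : Fin n → ℤ), 0 < m →
      m • p = ∑ i, k i • b i → m • q = ∑ i, k i • a i := by
    intro p
    obtain ⟨m₀, k₀, hm₀, h₀⟩ := hbbasis p
    obtain ⟨q, hq⟩ := htransfer m₀ k₀ hm₀ ⟨p, h₀⟩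
    refine ⟨q, fun m k hm h => ?_⟩
    refine uniqQ m₀ _ _ hm₀ ?_
    have key := hcross m m₀ k k₀ p hm hm₀ h h₀
    calc m₀ • m • q = m • m₀ • q := smul_comm _ _ _
      _ = m • ∑ i, k₀ i • a i := by rw [hq]
      _ = ∑ i, ((m : ℤ) * k₀ i) • a i := by
          rw [Finset.smul_sum]
          exact Finset.sum_congr rfl fun j _ => by
            rw [mul_smul, natCast_zsmul]
      _ = ∑ i, ((m₀ : ℤ) * k i) • a i := by
          exact Finset.sum_congr rfl fun j _ => by rw [key j]
      _ = m₀ • ∑ i, k i • a i := by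
          rw [Finset.smul_sum]
          exact Finset.sum_congr rfl fun j _ => by
            rw [mul_smul, natCast_zsmul]
  choose F hFspec using hF
  have hadd : ∀ p₁ p₂ : P, F (p₁ + p₂) = F p₁ + F p₂ := by
    intro p₁ p₂
    obtain ⟨m₁, k₁, hm₁, h₁⟩ := hbbasis p₁
    obtain ⟨m₂, k₂, hm₂, h₂⟩ := hbbasis p₂
    have hm : 0 < m₁ * m₂ := Nat.mul_pos hm₁ hm₂
    have hrep : (m₁ * m₂) • (p₁ + p₂) = ∑ i, ((m₂ : ℤ) * k₁ i + (m₁ : ℤ) * k₂ i) • b i := by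
      rw [smul_add]
      calc (m₁ * m₂) • p₁ + (m₁ * m₂) • p₂
          = m₂ • (m₁ • p₁) + m₁ • (m₂ • p₂) := by
            rw [← mul_smul, ← mul_smul, Nat.mul_comm m₂ m₁]
        _ = m₂ • (∑ i, k₁ i • b i) + m₁ • (∑ i, k₂ i • b i) := by rw [h₁, h₂]
        _ = ∑ i, ((m₂ : ℤ) * k₁ i + (m₁ : ℤ) * k₂ i) • b i := by
            rw [Finset.smul_sum, Finset.smul_sum, ← Finset.sum_add_distrib]
            exact Finset.sum_congr rfl fun j _ => by
              rw [add_smul, mul_smul, mul_smul, natCast_zsmul, natCast_zsmul]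
    have hL := hFspec (p₁ + p₂) (m₁ * m₂) _ hm hrep
    refine uniqQ (m₁ * m₂) _ _ hm ?_
    rw [hL, smul_add]
    calc ∑ i, ((m₂ : ℤ) * k₁ i + (m₁ : ℤ) * k₂ i) • a i
        = m₂ • (∑ i, k₁ i • a i) + m₁ • (∑ i, k₂ i • a i) := by
          rw [Finset.smul_sum, Finset.smul_sum, ← Finset.sum_add_distrib]
          exact Finset.sum_congr rfl fun j _ => by
            rw [add_smul, mul_smul, mul_smul, natCast_zsmul, natCast_zsmul]
      _ = m₂ • (m₁ • F p₁) + m₁ • (m₂ • F p₂) := by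
          rw [hFspec p₁ m₁ k₁ hm₁ h₁, hFspec p₂ m₂ k₂ hm₂ h₂]
      _ = (m₁ * m₂) • F p₁ + (m₁ * m₂) • F p₂ := by
          rw [← mul_smul, ← mul_smul, Nat.mul_comm m₂ m₁]
  let f : P →+ Q := AddMonoidHom.mk' F hadd
  constructor
  · refine ⟨f, ?_, ?_, ?_⟩
    · rw [injective_iff_map_eq_zero]
      intro p hp
      obtain ⟨m, k, hm, h⟩ := hbbasis p
      have hq := hFspec p m k hm h
      have hfp : f p = F p := rfl
      rw [← hfp, hp, smul_zero] at hq
      have hk : ∀ i, k i = 0 := haindep k hq.symm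
      have : m • p = 0 := by
        rw [h]
        exact Finset.sum_eq_zero fun j _ => by rw [hk j, zero_smul]
      exact htfP m p hm this
    · intro i
      have hrep : (1 : ℕ) • b i = ∑ j, (if j = i then (1 : ℤ) else 0) • b j := by
        simp
      have := hFspec (b i) 1 _ Nat.one_pos hrep
      exact (by simpa using this : F (b i) = a i)
    · intro p m k hm h
      exact hFspec p m k hm h
  · intro f g hf hg
    ext p
    obtain ⟨m, k, hm, h⟩ := hbbasis p
    refine uniqQ m _ _ hm ?_
    calc m • f p = f (m • p) := (map_nsmul f m p).symm
      _ = f (∑ i, k i • b i) := by rw [h]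
      _ = ∑ i, k i • a i := by
          rw [map_sum]
          exact Finset.sum_congr rfl fun j _ => by rw [map_zsmul, hf j]
      _ = g (∑ i, k i • b i) := by
          rw [map_sum]
          exact (Finset.sum_congr rfl fun j _ => by rw [map_zsmul, hg j]).symm
      _ = g (m • p) := by rw [h]
      _ = m • g p := map_nsmul g m p
end

section
/- If a structure A is a model of the theory of (ℤ,+,<,0,1) and a ∈ A has the residue sequence of 0 (i.e., for every n ≥ 1 there is b with n·b = a), then for every rational q = k/m (m > 0) there is a unique element qa ∈ A with m·(qa) = k·a; moreover the map q ↦ qa is an injective order-preserving group homomorphism from ℚ into A when a > 0. -/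
/-- Let `A` be a model of the theory of `(ℤ, +, <, 0, 1)` (a discretely
ordered abelian group, with `one` the successor of `0`, satisfying the
Presburger division-with-remainder axioms), and let `a ∈ A` have the residue
sequence of `0`, i.e. `a` is divisible by every positive integer.  Then for
every rational `q = k/m` there is a unique element `q • a` with
`m • (q • a) = k • a`; moreover, when `a > 0`, the map `q ↦ q • a` is an
injective order-preserving group homomorphism from `ℚ` into `A`. -/
theorem rationals_embed_along_divisible_element
    {A : Type*} [AddCommGroup A] [LinearOrder A] [IsOrderedAddMonoid A] (one : A) (hone : 0 < one)
    (hdisc : ∀ x : A, ¬ (0 < x ∧ x < one))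
    (hdivrem : ∀ n : ℕ, 2 ≤ n → ∀ x : A, ∃ y : A, ∃ r : ℕ, r < n ∧ x = n • y + r • one)
    (a : A) (ha : ∀ n : ℕ, 0 < n → ∃ b : A, n • b = a) :
    (∀ (k : ℤ) (m : ℕ), 0 < m → ∃! x : A, m • x = k • a) ∧
    (0 < a → ∃ f : ℚ → A,
      (∀ q q' : ℚ, f (q + q') = f q + f q') ∧
      StrictMono f ∧ Function.Injective f ∧
      ∀ q : ℚ, q.den • f q = q.num • a) := by
  have hinj : ∀ n : ℕ, 0 < n → ∀ x y : A, n • x = n • y → x = y := fun n hn x y h =>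
    (nsmul_right_strictMono (M := A) hn.ne').injective h
  have hex : ∀ (k : ℤ) (m : ℕ), 0 < m → ∃! x : A, m • x = k • a := by
    intro k m hm
    obtain ⟨b, hb⟩ := ha m hm
    refine ⟨k • b, ?_, ?_⟩
    · show m • (k • b) = k • a
      rw [smul_comm, hb]
    · intro y hy
      apply hinj m hm
      rw [hy, smul_comm, hb]
  refine ⟨hex, fun hapos => ?_⟩
  choose f hf using fun q : ℚ => (hex q.num q.den q.pos).exists
  -- key computation
  have hkey : ∀ (q : ℚ) (m : ℕ), ((q.den * m : ℕ) : ℤ) • f q = (q.num * m) • a := by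
    intro q m
    rw [natCast_zsmul, mul_comm q.den m, mul_nsmul', hf q, mul_zsmul, natCast_zsmul,
      smul_comm]
  -- consistency: if m • x = k • a and q = k/m then f q = x
  have hcons : ∀ (k : ℤ) (m : ℕ), 0 < m → ∀ x : A, m • x = k • a →
      ∀ q : ℚ, (q : ℚ) = (k : ℚ) / (m : ℚ) → f q = x := by
    intro k m hm x hx q hq
    have hm0 : (m : ℚ) ≠ 0 := Nat.cast_ne_zero.2 hm.ne'
    have hd0 : ((q.den : ℚ)) ≠ 0 := Nat.cast_ne_zero.2 q.den_nz
    have hnum : q.num * (m : ℤ) = k * (q.den : ℤ) := by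
      have h1 : ((q.num : ℚ)) / (q.den : ℚ) = (k : ℚ) / (m : ℚ) := by
        rw [Rat.num_div_den q]; exact hq
      have h2 : ((q.num : ℚ)) * (m : ℚ) = (k : ℚ) * (q.den : ℚ) := by
        field_simp at h1; linarith
      exact_mod_cast h2
    apply hinj (q.den * m) (Nat.mul_pos q.pos hm)
    have h3 : (q.den * m) • x = (k * q.den) • a := by
      rw [mul_nsmul', hx, mul_zsmul, natCast_zsmul, smul_comm]
    have h4 := hkey q m
    rw [hnum] at h4
    calc (q.den * m) • f q = ((q.den * m : ℕ) : ℤ) • f q := (natCast_zsmul _ _).symm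
      _ = (k * q.den) • a := h4
      _ = (q.den * m) • x := h3.symm
  have hadd : ∀ q q' : ℚ, f (q + q') = f q + f q' := by
    intro q q'
    apply hcons (q.num * q'.den + q'.num * q.den) (q.den * q'.den)
      (Nat.mul_pos q.pos q'.pos)
    · show (q.den * q'.den) • (f q + f q') =
        (q.num * q'.den + q'.num * q.den) • a
      rw [smul_add, ← natCast_zsmul (f q) (q.den * q'.den),
        ← natCast_zsmul (f q') (q.den * q'.den), hkey q q'.den,
        show (q.den * q'.den : ℕ) = q'.den * q.den from Nat.mul_comm _ _,
        hkey q' q.den, ← add_zsmul]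
    · have hd0 : ((q.den : ℚ)) ≠ 0 := Nat.cast_ne_zero.2 q.den_nz
      have hd0' : ((q'.den : ℚ)) ≠ 0 := Nat.cast_ne_zero.2 q'.den_nz
      have h1 : (q : ℚ) * q.den = q.num := by
        nth_rewrite 1 [← Rat.num_div_den q]
        exact div_mul_cancel₀ (q.num : ℚ) hd0
      have h2 : (q' : ℚ) * q'.den = q'.num := by
        nth_rewrite 1 [← Rat.num_div_den q']
        exact div_mul_cancel₀ (q'.num : ℚ) hd0'
      rw [eq_div_iff (by positivity)]
      push_cast
      nlinarith [h1, h2]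
  have hmono : StrictMono f := by
    intro q q' hqq'
    have hnum : q.num * q'.den < q'.num * q.den := by
      have h1 : ((q.num : ℚ)) / (q.den : ℚ) < ((q'.num : ℚ)) / (q'.den : ℚ) := by
        rw [Rat.num_div_den q, Rat.num_div_den q']; exact_mod_cast hqq'
      rw [div_lt_div_iff₀ (by exact_mod_cast q.pos) (by exact_mod_cast q'.pos)] at h1
      exact_mod_cast h1
    have h2 : (q.num * q'.den) • a < (q'.num * q.den) • a :=
      zsmul_left_strictMono hapos hnum
    have h3 : ((q.den * q'.den : ℕ) : ℤ) • f q < ((q.den * q'.den : ℕ) : ℤ) • f q' := by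
      rw [hkey q q'.den,
        show (q.den * q'.den : ℕ) = q'.den * q.den from Nat.mul_comm _ _, hkey q' q.den]
      exact h2
    rw [natCast_zsmul, natCast_zsmul] at h3
    exact (nsmul_right_strictMono (M := A)
      (Nat.mul_pos q.pos q'.pos).ne').lt_iff_lt.mp h3
  exact ⟨f, hadd, hmono, hmono.injective, hf⟩
end
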